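/- Let N ≥ 3 and k = (k_0,…,k_{r-1}) positive integers summing to N, with the operator P = (1/N)Σ_ℓ P_ℓ on L²(μ_{N,k}) as above. Then the spectrum of P is {0, 1/(N−1), 1}. The eigenspace for eigenvalue 1/(N−1) has dimension (N−1)(r−1), and for any basis {g_1,…,g_{r-1}} of K_{N,k} = {g : Σ_m k_m g(m) = 0}, the functions f_{m,ℓ}(x) = g_m(x_ℓ) for 1 ≤ m ≤ r−1, 1 ≤ ℓ ≤ N−1 form a basis of this eigenspace. -/

import Mathlib

open scoped Classical BigOperators

/-- The multislice: tuples `x : Fin N → Fin r` in which each value `m` is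
attained exactly `k m` times. -/
def multislice (N r : ℕ) (k : Fin r → ℕ) : Finset (Fin N → Fin r) :=
  Finset.univ.filter fun x => ∀ m : Fin r,
    (Finset.univ.filter fun ℓ => x ℓ = m).card = k m

/-- `P_ℓ`: conditional expectation given the coordinate `x ℓ`. -/
noncomputable def Pl (N r : ℕ) (k : Fin r → ℕ) (ℓ : Fin N)
    (f : (Fin N → Fin r) → ℝ) (x : Fin N → Fin r) : ℝ :=
  (∑ y ∈ (multislice N r k).filter (fun y => y ℓ = x ℓ), f y)
    / (((multislice N r k).filter (fun y => y ℓ = x ℓ)).card : ℝ)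

/-- `P = (1/N) ∑ ℓ, P_ℓ`. -/
noncomputable def Pop (N r : ℕ) (k : Fin r → ℕ)
    (f : (Fin N → Fin r) → ℝ) (x : Fin N → Fin r) : ℝ :=
  (1 / (N : ℝ)) * ∑ ℓ, Pl N r k ℓ f x

lemma mem_multislice_iff {N r : ℕ} {k : Fin r → ℕ} {x : Fin N → Fin r} :
    x ∈ multislice N r k ↔ ∀ m : Fin r,
      (Finset.univ.filter fun ℓ => x ℓ = m).card = k m := by
  simp [multislice]

lemma perm_mem_multislice {N r : ℕ} {k : Fin r → ℕ} {x : Fin N → Fin r}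
    (σ : Equiv.Perm (Fin N)) (hx : x ∈ multislice N r k) :
    (x ∘ σ) ∈ multislice N r k := by
  rw [mem_multislice_iff] at hx ⊢
  intro m
  rw [← hx m]
  apply Finset.card_nbij (fun i => σ i)
  · intro i hi; simp_all
  · intro i _ j _ h; exact σ.injective h
  · intro j hj
    simp only [Finset.coe_filter, Set.mem_setOf_eq, Set.mem_image] at hj ⊢
    exact ⟨σ.symm j, by simpa using hj⟩

/-- sum of a coordinate function over all coordinates, on the multislice -/
lemma sum_coord {N r : ℕ} {k : Fin r → ℕ} {x : Fin N → Fin r}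
    (hx : x ∈ multislice N r k) (u : Fin r → ℝ) :
    ∑ i, u (x i) = ∑ m, (k m : ℝ) * u m := by
  rw [mem_multislice_iff] at hx
  rw [← Finset.sum_fiberwise Finset.univ x (fun i => u (x i))]
  refine Finset.sum_congr rfl fun m _ => ?_
  rw [Finset.sum_congr rfl (fun i hi => by
    simp only [Finset.mem_filter] at hi; rw [hi.2]),
    Finset.sum_const, ← hx m]
  simp [mul_comm]

lemma exists_base (N r : ℕ) (k : Fin r → ℕ) (hk : ∑ m, k m = N) :
    ∃ x : Fin N → Fin r, ∀ m : Fin r,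
      (Finset.univ.filter fun ℓ => x ℓ = m).card = k m := by
  classical
  set l : List (Fin r) := (List.finRange r).flatMap fun m => List.replicate (k m) m with hl
  have hlen : l.length = N := by
    rw [hl, List.length_flatMap]
    simp only [Function.comp_def, List.length_replicate]
    rw [← Fin.sum_univ_def, hk]
  set v : List.Vector (Fin r) N := ⟨l, hlen⟩ with hv
  refine ⟨fun i => v.get i, fun m => ?_⟩
  have h2 := Fin.card_filter_univ_eq_vector_get_eq_count m v
  show (Finset.filter (fun i => v.get i = m) Finset.univ).card = k m
  rw [h2]
  have : v.toList = l := rfl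
  rw [this, hl, List.count_flatMap]
  simp only [Function.comp_def, List.count_replicate]
  rw [← Fin.sum_univ_def]
  simp

lemma exists_two_coords (N r : ℕ) (k : Fin r → ℕ) (hk : ∑ m, k m = N)
    (hpos : ∀ m, 1 ≤ k m) (p q : Fin N) (hpq : p ≠ q) (a b : Fin r) (hab : a ≠ b) :
    ∃ x ∈ multislice N r k, x p = a ∧ x q = b := by
  classical
  obtain ⟨x0, hx0⟩ := exists_base N r k hk
  have hx0m : x0 ∈ multislice N r k := mem_multislice_iff.mpr hx0
  -- find positions of a and b
  have ha : ((Finset.univ.filter fun ℓ => x0 ℓ = a)).Nonempty := by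
    rw [← Finset.card_pos, hx0 a]; exact hpos a
  have hb : ((Finset.univ.filter fun ℓ => x0 ℓ = b)).Nonempty := by
    rw [← Finset.card_pos, hx0 b]; exact hpos b
  obtain ⟨i, hi⟩ := ha
  obtain ⟨j, hj⟩ := hb
  simp only [Finset.mem_filter] at hi hj
  have hij : i ≠ j := fun h => hab (by rw [← hi.2, ← hj.2, h])
  -- first swap p ↔ i
  set σ : Equiv.Perm (Fin N) := Equiv.swap p i with hσ
  set x1 := x0 ∘ σ with hx1
  have hx1p : x1 p = a := by simp [hx1, hσ, Equiv.swap_apply_left, hi.2]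
  set j' := σ.symm j with hj'
  have hx1j' : x1 j' = b := by simp [hx1, hj', hj.2]
  have hpj' : p ≠ j' := by
    intro h
    have : σ p = j := by rw [h, hj']; simp
    rw [hσ, Equiv.swap_apply_left] at this
    exact hij this
  set τ : Equiv.Perm (Fin N) := Equiv.swap q j' with hτ
  refine ⟨x1 ∘ τ, perm_mem_multislice τ (perm_mem_multislice σ hx0m), ?_, ?_⟩
  · show x1 (τ p) = a
    rw [hτ, Equiv.swap_apply_of_ne_of_ne hpq hpj', hx1p]
  · show x1 (τ q) = b
    rw [hτ, Equiv.swap_apply_left, hx1j']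

lemma multislice_nonempty (N r : ℕ) (k : Fin r → ℕ) (hk : ∑ m, k m = N) :
    (multislice N r k).Nonempty := by
  obtain ⟨x0, hx0⟩ := exists_base N r k hk
  exact ⟨x0, mem_multislice_iff.mpr hx0⟩

/-- the sum of `u (y ℓ)` over `y` in the slice with `y i` fixed does not
depend on `ℓ ≠ i`. -/
lemma sum_swap_coord {N r : ℕ} {k : Fin r → ℕ} (i j ℓ : Fin N) (hj : j ≠ i)
    (hℓ : ℓ ≠ i) (u : Fin r → ℝ) (c : Fin r) :
    ∑ y ∈ (multislice N r k).filter (fun y => y i = c), u (y ℓ)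
      = ∑ y ∈ (multislice N r k).filter (fun y => y i = c), u (y j) := by
  classical
  refine Finset.sum_nbij' (fun y => y ∘ Equiv.swap j ℓ) (fun y => y ∘ Equiv.swap j ℓ)
    ?_ ?_ ?_ ?_ ?_
  · intro y hy
    simp only [Finset.mem_filter] at hy ⊢
    refine ⟨perm_mem_multislice _ hy.1, ?_⟩
    show y (Equiv.swap j ℓ i) = c
    rw [Equiv.swap_apply_of_ne_of_ne (Ne.symm hj) (Ne.symm hℓ)]
    exact hy.2
  · intro y hy
    simp only [Finset.mem_filter] at hy ⊢
    refine ⟨perm_mem_multislice _ hy.1, ?_⟩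
    show y (Equiv.swap j ℓ i) = c
    rw [Equiv.swap_apply_of_ne_of_ne (Ne.symm hj) (Ne.symm hℓ)]
    exact hy.2
  · intro y _; funext t; simp [Function.comp, Equiv.swap_apply_self]
  · intro y _; funext t; simp [Function.comp, Equiv.swap_apply_self]
  · intro y _
    show u (y ℓ) = u (y (Equiv.swap j ℓ j))
    rw [Equiv.swap_apply_left]



lemma slice_card_ne {N r : ℕ} {k : Fin r → ℕ} {x : Fin N → Fin r}
    (hx : x ∈ multislice N r k) (i : Fin N) :
    (((multislice N r k).filter (fun y => y i = x i)).card : ℝ) ≠ 0 := by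
  have : x ∈ (multislice N r k).filter (fun y => y i = x i) :=
    Finset.mem_filter.mpr ⟨hx, rfl⟩
  have h := Finset.card_pos.mpr ⟨x, this⟩
  positivity

lemma Pl_congr {N r : ℕ} {k : Fin r → ℕ} {f f' : (Fin N → Fin r) → ℝ}
    (h : ∀ y ∈ multislice N r k, f y = f' y) (i : Fin N) (x : Fin N → Fin r) :
    Pl N r k i f x = Pl N r k i f' x := by
  unfold Pl
  congr 1
  refine Finset.sum_congr rfl fun y hy => h y (Finset.mem_filter.mp hy).1

lemma Pl_same {N r : ℕ} {k : Fin r → ℕ} {x : Fin N → Fin r}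
    (hx : x ∈ multislice N r k) (i : Fin N) (u : Fin r → ℝ) :
    Pl N r k i (fun y => u (y i)) x = u (x i) := by
  unfold Pl
  have h1 : ∀ y ∈ (multislice N r k).filter (fun y => y i = x i),
      (fun y => u (y i)) y = u (x i) := fun y hy => by
    simp only; rw [(Finset.mem_filter.mp hy).2]
  rw [Finset.sum_congr rfl h1, Finset.sum_const, nsmul_eq_mul]
  rw [mul_comm, mul_div_assoc, div_self (slice_card_ne hx i), mul_one]

lemma Pl_other {N r : ℕ} (hN : 2 ≤ N) {k : Fin r → ℕ} {x : Fin N → Fin r}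
    (hx : x ∈ multislice N r k) (i j : Fin N) (hij : j ≠ i) (u : Fin r → ℝ) :
    Pl N r k i (fun y => u (y j)) x
      = ((∑ m, (k m : ℝ) * u m) - u (x i)) / ((N : ℝ) - 1) := by
  classical
  set F := (multislice N r k).filter (fun y => y i = x i) with hF
  set T := ∑ y ∈ F, u (y j) with hT
  have hswap : ∀ j' : Fin N, j' ≠ i → ∑ y ∈ F, u (y j') = T :=
    fun j' hj' => sum_swap_coord i j j' hij hj' u (x i)
  have hcard : ((Finset.univ.erase i).card : ℝ) = (N : ℝ) - 1 := by
    rw [Finset.card_erase_of_mem (Finset.mem_univ i)]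
    simp only [Finset.card_univ, Fintype.card_fin]
    have : 1 ≤ N := by omega
    push_cast [Nat.cast_sub this]
    ring
  have key : ((N : ℝ) - 1) * T = (F.card : ℝ) * ((∑ m, (k m : ℝ) * u m) - u (x i)) := by
    rw [← hcard, ← nsmul_eq_mul, ← Finset.sum_const, Finset.sum_congr rfl
      (fun j' hj' => (hswap j' (Finset.ne_of_mem_erase hj')).symm), Finset.sum_comm]
    rw [Finset.sum_congr rfl (fun y hy => ?_), Finset.sum_const, nsmul_eq_mul]
    have hyV : y ∈ multislice N r k := (Finset.mem_filter.mp hy).1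
    have hyi : y i = x i := (Finset.mem_filter.mp hy).2
    rw [Finset.sum_erase_eq_sub (Finset.mem_univ i), sum_coord hyV u, hyi]
  have hc : (F.card : ℝ) ≠ 0 := slice_card_ne hx i
  have hN1 : (N : ℝ) - 1 ≠ 0 := by
    have : (2 : ℝ) ≤ (N : ℝ) := by exact_mod_cast hN
    linarith
  show T / (F.card : ℝ) = _
  field_simp at key ⊢
  linarith [key]

lemma Pl_const_add_sum {N r : ℕ} {k : Fin r → ℕ} {x : Fin N → Fin r}
    (hx : x ∈ multislice N r k) (i : Fin N) (c : ℝ)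
    (F : Fin N → (Fin N → Fin r) → ℝ) :
    Pl N r k i (fun y => c + ∑ ℓ, F ℓ y) x = c + ∑ ℓ, Pl N r k i (F ℓ) x := by
  unfold Pl
  rw [Finset.sum_add_distrib, Finset.sum_const, nsmul_eq_mul, add_div,
    mul_comm, mul_div_assoc, div_self (slice_card_ne hx i), mul_one,
    Finset.sum_comm, Finset.sum_div]

lemma Pop_formula {N r : ℕ} (hN : 2 ≤ N) {k : Fin r → ℕ} {x : Fin N → Fin r}
    (hx : x ∈ multislice N r k) (C : ℝ) (u : Fin N → Fin r → ℝ)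
    (hu : ∀ ℓ, ∑ m, (k m : ℝ) * u ℓ m = 0) (f : (Fin N → Fin r) → ℝ)
    (hf : ∀ y ∈ multislice N r k, f y = C + ∑ ℓ, u ℓ (y ℓ)) :
    Pop N r k f x = C + (1 / ((N : ℝ) - 1)) * ∑ ℓ, u ℓ (x ℓ) := by
  classical
  have hN1 : (N : ℝ) - 1 ≠ 0 := by
    have : (2 : ℝ) ≤ (N : ℝ) := by exact_mod_cast hN
    linarith
  have hN0 : (N : ℝ) ≠ 0 := by positivity
  set W := ∑ ℓ, u ℓ (x ℓ) with hW
  have hPl : ∀ i : Fin N, Pl N r k i f x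
      = C + u i (x i) - (1 / ((N : ℝ) - 1)) * ∑ ℓ ∈ Finset.univ.erase i, u ℓ (x i) := by
    intro i
    rw [Pl_congr hf i x, Pl_const_add_sum hx i C (fun ℓ => fun y => u ℓ (y ℓ))]
    rw [← Finset.add_sum_erase _ _ (Finset.mem_univ i), Pl_same hx i (u i)]
    rw [Finset.sum_congr rfl (fun ℓ hℓ =>
      Pl_other hN hx i ℓ (Finset.ne_of_mem_erase hℓ) (u ℓ))]
    rw [Finset.sum_congr rfl (fun ℓ (hℓ : ℓ ∈ Finset.univ.erase i) => by rw [hu ℓ])]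
    rw [← Finset.sum_div,
      show (∑ ℓ ∈ Finset.univ.erase i, (0 - u ℓ (x i)))
        = -∑ ℓ ∈ Finset.univ.erase i, u ℓ (x i) by
        rw [← Finset.sum_neg_distrib]
        exact Finset.sum_congr rfl fun ℓ _ => by ring]
    field_simp
    ring
  have hdd : ∑ i, ∑ ℓ ∈ Finset.univ.erase i, u ℓ (x i) = -W := by
    rw [Finset.sum_congr rfl (fun i (_ : i ∈ Finset.univ) =>
      Finset.sum_erase_eq_sub (Finset.mem_univ i)), Finset.sum_sub_distrib,
      Finset.sum_comm,
      Finset.sum_congr rfl (fun ℓ (_ : ℓ ∈ Finset.univ) => sum_coord hx (u ℓ)),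
      Finset.sum_congr rfl (fun ℓ (_ : ℓ ∈ Finset.univ) => hu ℓ)]
    simp [hW]
  unfold Pop
  rw [Finset.sum_congr rfl (fun i (_ : i ∈ Finset.univ) => hPl i)]
  rw [Finset.sum_sub_distrib, Finset.sum_add_distrib, Finset.sum_const,
    ← Finset.mul_sum, hdd]
  simp only [Finset.card_univ, Fintype.card_fin, nsmul_eq_mul, ← hW]
  field_simp
  ring

lemma eigen_decomp {N r : ℕ} (hN : 2 ≤ N) {k : Fin r → ℕ} (hk : ∑ m, k m = N)
    {μ : ℝ} (hμ : μ ≠ 0) (f : (Fin N → Fin r) → ℝ)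
    (hf : ∀ x ∈ multislice N r k, Pop N r k f x = μ * f x) :
    ∃ (C : ℝ) (u : Fin N → Fin r → ℝ),
      (∀ ℓ, ∑ m, (k m : ℝ) * u ℓ m = 0) ∧
      (∀ x ∈ multislice N r k, f x = C + ∑ ℓ, u ℓ (x ℓ)) := by
  classical
  have hN0 : (N : ℝ) ≠ 0 := by
    have : 0 < N := by omega
    positivity
  have hkN : ∑ m, (k m : ℝ) = (N : ℝ) := by exact_mod_cast congrArg (Nat.cast : ℕ → ℝ) hk
  set H : Fin N → Fin r → ℝ := fun ℓ m =>
    (∑ y ∈ (multislice N r k).filter (fun y => y ℓ = m), f y)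
      / (((multislice N r k).filter (fun y => y ℓ = m)).card : ℝ) with hH
  have hPlH : ∀ (ℓ : Fin N) (x : Fin N → Fin r), Pl N r k ℓ f x = H ℓ (x ℓ) := by
    intro ℓ x; rfl
  set c : Fin N → ℝ := fun ℓ => (∑ m, (k m : ℝ) * H ℓ m) / (N : ℝ) with hc
  refine ⟨(∑ ℓ, c ℓ) / (μ * N), fun ℓ m => (H ℓ m - c ℓ) / (μ * N), fun ℓ => ?_, fun x hx => ?_⟩
  · have : ∑ m, (k m : ℝ) * ((H ℓ m - c ℓ) / (μ * N))
        = ((∑ m, (k m : ℝ) * H ℓ m) - (∑ m, (k m : ℝ)) * c ℓ) / (μ * N) := by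
      rw [Finset.sum_congr rfl (fun m (_ : m ∈ Finset.univ) =>
        show (k m : ℝ) * ((H ℓ m - c ℓ) / (μ * N))
          = ((k m : ℝ) * H ℓ m - (k m : ℝ) * c ℓ) / (μ * N) by ring),
        ← Finset.sum_div, Finset.sum_sub_distrib, ← Finset.sum_mul]
    rw [this, hkN]
    rw [hc]
    field_simp
    ring
  · have h1 : μ * f x = (1 / (N : ℝ)) * ∑ ℓ, H ℓ (x ℓ) := by
      rw [← hf x hx]
      unfold Pop
      rw [Finset.sum_congr rfl fun ℓ _ => hPlH ℓ x]
    have h2 : ∑ ℓ, (H ℓ (x ℓ) - c ℓ) / (μ * N)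
        = ((∑ ℓ, H ℓ (x ℓ)) - ∑ ℓ, c ℓ) / (μ * N) := by
      rw [← Finset.sum_div, Finset.sum_sub_distrib]
    rw [h2]
    have h3 : (∑ ℓ, H ℓ (x ℓ)) = μ * N * f x := by
      field_simp at h1
      linarith
    rw [h3]
    field_simp
    ring

lemma mem_span_K {r : ℕ} (hr : 2 ≤ r) {k : Fin r → ℕ} (hpos : ∀ m, 1 ≤ k m)
    (g : Fin (r - 1) → Fin r → ℝ) (hg0 : ∀ i, ∑ m, (k m : ℝ) * g i m = 0)
    (hgli : LinearIndependent ℝ g) (u : Fin r → ℝ)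
    (hu : ∑ m, (k m : ℝ) * u m = 0) :
    u ∈ Submodule.span ℝ (Set.range g) := by
  classical
  have : Nonempty (Fin (r - 1)) := ⟨⟨0, by omega⟩⟩
  set φ : (Fin r → ℝ) →ₗ[ℝ] ℝ := ∑ m, (k m : ℝ) • LinearMap.proj m with hφ
  have hφapp : ∀ v : Fin r → ℝ, φ v = ∑ m, (k m : ℝ) * v m := by
    intro v
    simp [hφ, LinearMap.sum_apply, LinearMap.smul_apply, LinearMap.proj_apply,
      smul_eq_mul]
  have hS : (0 : ℝ) < ∑ m, (k m : ℝ) := by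
    apply Finset.sum_pos
    · intro m _
      have := hpos m
      have : (1 : ℝ) ≤ (k m : ℝ) := by exact_mod_cast this
      linarith
    · exact ⟨⟨0, by omega⟩, Finset.mem_univ _⟩
  have hrange : LinearMap.range φ = ⊤ := by
    rw [LinearMap.range_eq_top]
    intro y
    refine ⟨fun _ => y / ∑ m, (k m : ℝ), ?_⟩
    rw [hφapp, ← Finset.sum_mul]
    field_simp
  have hker : Module.finrank ℝ (LinearMap.ker φ) = r - 1 := by
    have h1 := LinearMap.finrank_range_add_finrank_ker φ
    rw [hrange, finrank_top] at h1
    have h2 : Module.finrank ℝ ℝ = 1 := Module.finrank_self ℝ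
    have h3 : Module.finrank ℝ (Fin r → ℝ) = r := by
      simp [Module.finrank_pi]
    omega
  set g' : Fin (r - 1) → LinearMap.ker φ := fun i =>
    ⟨g i, by rw [LinearMap.mem_ker, hφapp]; exact hg0 i⟩ with hg'
  have hli' : LinearIndependent ℝ g' := by
    apply LinearIndependent.of_comp (LinearMap.ker φ).subtype
    exact hgli
  have hspan : Submodule.span ℝ (Set.range g') = ⊤ := by
    apply hli'.span_eq_top_of_card_eq_finrank
    simp [hker]
  have humem : (⟨u, by rw [LinearMap.mem_ker, hφapp]; exact hu⟩ : LinearMap.ker φ)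
      ∈ Submodule.span ℝ (Set.range g') := by rw [hspan]; trivial
  have := Submodule.mem_map_of_mem (f := (LinearMap.ker φ).subtype) humem
  rw [Submodule.map_span, ← Set.range_comp] at this
  exact this

lemma coord_span_mem {N r : ℕ} {k : Fin r → ℕ} (hNle : N - 1 ≤ N)
    (g : Fin (r - 1) → Fin r → ℝ) (w : Fin r → ℝ)
    (hw : w ∈ Submodule.span ℝ (Set.range g)) (ℓ' : Fin (N - 1)) :
    (fun x : ↥(multislice N r k) => w ((x : Fin N → Fin r) (Fin.castLE hNle ℓ')))
      ∈ Submodule.span ℝ (Set.range (fun p : Fin (r - 1) × Fin (N - 1) =>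
          fun x : ↥(multislice N r k) =>
            g p.1 ((x : Fin N → Fin r) (Fin.castLE hNle p.2))) ) := by
  classical
  set Φ : (Fin r → ℝ) →ₗ[ℝ] (↥(multislice N r k) → ℝ) :=
    { toFun := fun w => fun x => w ((x : Fin N → Fin r) (Fin.castLE hNle ℓ'))
      map_add' := fun a b => rfl
      map_smul' := fun a b => rfl } with hΦ
  have h1 : Φ w ∈ Submodule.map Φ (Submodule.span ℝ (Set.range g)) :=
    Submodule.mem_map_of_mem hw
  rw [Submodule.map_span, ← Set.range_comp] at h1
  refine Submodule.span_mono ?_ h1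
  rintro - ⟨m, rfl⟩
  exact ⟨(m, ℓ'), rfl⟩

lemma sum_erase_last {N : ℕ} (h2 : N - 1 ≤ N) (q : Fin N) (hq : (q : ℕ) = N - 1)
    (F : Fin N → ℝ) :
    ∑ i ∈ Finset.univ.erase q, F i
      = ∑ ℓ' : Fin (N - 1), F (Fin.castLE h2 ℓ') := by
  classical
  refine (Finset.sum_bij' (fun (j : Fin N) (hj : j ∈ Finset.univ.erase q) =>
      (⟨j.1, by
        have h1 := Finset.ne_of_mem_erase hj
        have h3 : j.1 ≠ N - 1 := fun h => h1 (Fin.ext (by omega))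
        have := j.2
        omega⟩ : Fin (N - 1)))
    (fun ℓ' _ => Fin.castLE h2 ℓ') ?_ ?_ ?_ ?_ ?_)
  · intro j hj; exact Finset.mem_univ _
  · intro ℓ' _
    refine Finset.mem_erase.mpr ⟨?_, Finset.mem_univ _⟩
    intro h
    have := congrArg Fin.val h
    simp only [Fin.coe_castLE] at this
    have := ℓ'.2
    omega
  · intro j hj; apply Fin.ext; rfl
  · intro ℓ' _; apply Fin.ext; rfl
  · intro j hj; rfl

set_option maxHeartbeats 2000000 in
/-- Spectrum and gap eigenspace of `P` for `N ≥ 3`: every eigenvalue is `0`,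
`1/(N-1)` or `1`, and for any basis `g` of `K_{N,k}` the `(N-1)(r-1)`
functions `x ↦ g_m (x_ℓ)`, `m < r-1`, `ℓ < N-1`, form a basis (a linearly
independent spanning family) of the eigenspace for `1/(N-1)`, viewed as
functions on the multislice. -/
theorem Pop_spectrum_and_gap_eigenspace (N r : ℕ) (hN : 3 ≤ N) (hr : 2 ≤ r)
    (k : Fin r → ℕ) (hk : ∑ m, k m = N) (hpos : ∀ m, 1 ≤ k m)
    (g : Fin (r - 1) → Fin r → ℝ)
    (hg0 : ∀ i, ∑ m, (k m : ℝ) * g i m = 0)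
    (hgli : LinearIndependent ℝ g) :
    (∀ (μ : ℝ) (f : (Fin N → Fin r) → ℝ),
        (∃ x ∈ multislice N r k, f x ≠ 0) →
        (∀ x ∈ multislice N r k, Pop N r k f x = μ * f x) →
        μ = 0 ∨ μ = 1 / (N - 1 : ℝ) ∨ μ = 1) ∧
    (∀ p : Fin (r - 1) × Fin (N - 1), ∀ x ∈ multislice N r k,
        Pop N r k (fun z => g p.1 (z (Fin.castLE (by omega) p.2))) x
          = (1 / (N - 1 : ℝ)) * g p.1 (x (Fin.castLE (by omega) p.2))) ∧
    LinearIndependent ℝ (fun p : Fin (r - 1) × Fin (N - 1) =>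
      fun x : ↥(multislice N r k) =>
        g p.1 ((x : Fin N → Fin r) (Fin.castLE (by omega) p.2))) ∧
    (∀ f : (Fin N → Fin r) → ℝ,
        (∀ x ∈ multislice N r k, Pop N r k f x = (1 / (N - 1 : ℝ)) * f x) →
        (fun x : ↥(multislice N r k) => f x) ∈
          Submodule.span ℝ (Set.range (fun p : Fin (r - 1) × Fin (N - 1) =>
            fun x : ↥(multislice N r k) =>
              g p.1 ((x : Fin N → Fin r) (Fin.castLE (by omega) p.2))))) := by
  classical
  have hN2 : 2 ≤ N := by omega
  have hNR : (3 : ℝ) ≤ (N : ℝ) := by exact_mod_cast hN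
  have hN1ne : ((N : ℝ) - 1) ≠ 0 := by linarith
  refine ⟨?_, ?_, ?_, ?_⟩
  · -- Part 1: spectrum
    rintro μ f ⟨xb, hxb, hfxb⟩ heig
    by_cases h0 : μ = 0
    · exact Or.inl h0
    right
    obtain ⟨C, u, hu, hf⟩ := eigen_decomp hN2 hk h0 f heig
    have key : ∀ x ∈ multislice N r k,
        C + (1 / ((N : ℝ) - 1)) * (∑ ℓ, u ℓ (x ℓ)) = μ * (C + ∑ ℓ, u ℓ (x ℓ)) := by
      intro x hx
      rw [← Pop_formula hN2 hx C u hu f hf, heig x hx, hf x hx]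
    by_cases h1 : μ = 1 / ((N : ℝ) - 1)
    · exact Or.inl h1
    right
    have hsub : 1 / ((N : ℝ) - 1) - μ ≠ 0 := sub_ne_zero.mpr fun h => h1 h.symm
    set D := (μ - 1) * C / (1 / ((N : ℝ) - 1) - μ) with hD
    have hconst : ∀ x ∈ multislice N r k, ∑ ℓ, u ℓ (x ℓ) = D := by
      intro x hx
      rw [hD, eq_div_iff hsub]
      linear_combination key x hx
    have hfc : ∀ x ∈ multislice N r k, f x = C + D := fun x hx => by
      rw [hf x hx, hconst x hx]
    have hPc := Pop_formula hN2 hxb (C + D) (fun _ _ => (0 : ℝ))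
      (by intro ℓ; simp) f (fun y hy => by rw [hfc y hy]; simp)
    rw [heig xb hxb] at hPc
    simp only [Finset.sum_const_zero, mul_zero, add_zero] at hPc
    rw [hfc xb hxb] at hPc
    have hCD : C + D ≠ 0 := by rw [← hfc xb hxb]; exact hfxb
    have : (μ - 1) * (C + D) = 0 := by linarith
    rcases mul_eq_zero.mp this with h | h
    · linarith
    · exact absurd h hCD
  · -- Part 2: eigenfunctions
    rintro p x hx
    set cl : Fin N := Fin.castLE (by omega) p.2 with hcl
    set u : Fin N → Fin r → ℝ := fun ℓ m => if ℓ = cl then g p.1 m else 0 with huu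
    have hu : ∀ ℓ, ∑ m, (k m : ℝ) * u ℓ m = 0 := by
      intro ℓ
      by_cases h : ℓ = cl
      · simp only [huu, h, if_pos rfl]
        exact hg0 p.1
      · simp [huu, h]
    have hsum : ∀ y : Fin N → Fin r, ∑ ℓ, u ℓ (y ℓ) = g p.1 (y cl) := by
      intro y
      rw [Finset.sum_eq_single cl]
      · simp [huu]
      · intro b _ hb; simp [huu, hb]
      · intro h; exact absurd (Finset.mem_univ cl) h
    have hf : ∀ y ∈ multislice N r k,
        (fun z => g p.1 (z cl)) y = 0 + ∑ ℓ, u ℓ (y ℓ) := by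
      intro y _; rw [hsum y]; ring
    have := Pop_formula hN2 hx 0 u hu (fun z => g p.1 (z cl)) hf
    rw [hsum x, zero_add] at this
    exact this
  · -- Part 3: linear independence
    have hNle : N - 1 ≤ N := by omega
    have hkN : ∑ m, (k m : ℝ) = (N : ℝ) := by exact_mod_cast congrArg (Nat.cast : ℕ → ℝ) hk
    rw [Fintype.linearIndependent_iff]
    intro c hc
    have hc' : ∀ x : ↥(multislice N r k),
        ∑ p : Fin (r - 1) × Fin (N - 1),
          c p * g p.1 ((x : Fin N → Fin r) (Fin.castLE hNle p.2)) = 0 := by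
      intro x
      have h := congrFun hc x
      simpa [Finset.sum_apply] using h
    set hfun : Fin (N - 1) → Fin r → ℝ := fun ℓ v => ∑ m, c (m, ℓ) * g m v with hhfun
    have hsum : ∀ x ∈ multislice N r k,
        ∑ ℓ : Fin (N - 1), hfun ℓ (x (Fin.castLE hNle ℓ)) = 0 := by
      intro x hx
      have h := hc' ⟨x, hx⟩
      rw [← h, ← Finset.univ_product_univ, Finset.sum_product]
      exact Finset.sum_comm
    have hz : ∀ ℓ0 : Fin (N - 1), ∀ a b : Fin r, hfun ℓ0 a = hfun ℓ0 b := by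
      intro ℓ0 a b
      by_cases hab : a = b
      · rw [hab]
      have hpq : Fin.castLE hNle ℓ0 ≠ (⟨N - 1, by omega⟩ : Fin N) := by
        intro h
        have h2 := congrArg Fin.val h
        simp only [Fin.coe_castLE] at h2
        have := ℓ0.2
        omega
      obtain ⟨x, hx, hxp, hxq⟩ := exists_two_coords N r k hk hpos
        (Fin.castLE hNle ℓ0) (⟨N - 1, by omega⟩ : Fin N) hpq a b hab
      set x' := x ∘ Equiv.swap (Fin.castLE hNle ℓ0) (⟨N - 1, by omega⟩ : Fin N) with hx'd
      have hx'mem : x' ∈ multislice N r k := perm_mem_multislice _ hx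
      have hx'p : x' (Fin.castLE hNle ℓ0) = b := by
        show x (Equiv.swap _ _ (Fin.castLE hNle ℓ0)) = b
        rw [Equiv.swap_apply_left]; exact hxq
      have hcoord : ∀ ℓ : Fin (N - 1), ℓ ≠ ℓ0 →
          x' (Fin.castLE hNle ℓ) = x (Fin.castLE hNle ℓ) := by
        intro ℓ hℓ
        show x (Equiv.swap _ _ (Fin.castLE hNle ℓ)) = _
        rw [Equiv.swap_apply_of_ne_of_ne]
        · intro h
          have h2 := congrArg Fin.val h
          simp only [Fin.coe_castLE] at h2
          exact hℓ (Fin.ext h2)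
        · intro h
          have h2 := congrArg Fin.val h
          simp only [Fin.coe_castLE] at h2
          have := ℓ.2
          omega
      have e1 := hsum x hx
      have e2 := hsum x' hx'mem
      rw [← Finset.add_sum_erase _ _ (Finset.mem_univ ℓ0)] at e1 e2
      rw [hxp] at e1
      rw [hx'p] at e2
      have hrest : ∑ ℓ ∈ Finset.univ.erase ℓ0, hfun ℓ (x' (Fin.castLE hNle ℓ))
          = ∑ ℓ ∈ Finset.univ.erase ℓ0, hfun ℓ (x (Fin.castLE hNle ℓ)) :=
        Finset.sum_congr rfl fun ℓ hℓ => by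
          rw [hcoord ℓ (Finset.ne_of_mem_erase hℓ)]
      rw [hrest] at e2
      linarith
    have hconst0 : ∀ ℓ0 : Fin (N - 1), ∀ v : Fin r, hfun ℓ0 v = 0 := by
      intro ℓ0 v
      have hA : ∑ mm, (k mm : ℝ) * hfun ℓ0 mm = 0 := by
        simp only [hhfun]
        rw [Finset.sum_congr rfl (fun mm (_ : mm ∈ Finset.univ) =>
          show (k mm : ℝ) * ∑ j, c (j, ℓ0) * g j mm
            = ∑ j, c (j, ℓ0) * ((k mm : ℝ) * g j mm) by
              rw [Finset.mul_sum]
              exact Finset.sum_congr rfl fun j _ => by ring),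
          Finset.sum_comm]
        rw [Finset.sum_congr rfl (fun j (_ : j ∈ Finset.univ) =>
          show ∑ mm, c (j, ℓ0) * ((k mm : ℝ) * g j mm)
            = c (j, ℓ0) * ∑ mm, (k mm : ℝ) * g j mm by rw [Finset.mul_sum])]
        simp [hg0]
      have hB : ∑ mm, (k mm : ℝ) * hfun ℓ0 mm = (N : ℝ) * hfun ℓ0 v := by
        rw [Finset.sum_congr rfl (fun mm (_ : mm ∈ Finset.univ) => by
          rw [hz ℓ0 mm v]), ← Finset.sum_mul, hkN]
      have hN0 : (N : ℝ) ≠ 0 := by linarith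
      rw [hA] at hB
      rcases mul_eq_zero.mp hB.symm with h | h
      · exact absurd h hN0
      · exact h
    intro pr
    have hzero : ∑ m, c (m, pr.2) • g m = 0 := by
      funext v
      rw [Finset.sum_apply]
      simp only [Pi.smul_apply, smul_eq_mul, Pi.zero_apply]
      exact hconst0 pr.2 v
    have := (Fintype.linearIndependent_iff.mp hgli) (fun m => c (m, pr.2)) hzero pr.1
    simpa using this
  · -- Part 4: spanning
    have hNle : N - 1 ≤ N := by omega
    intro f heig
    have hμne : (1 / ((N : ℝ) - 1)) ≠ 0 := one_div_ne_zero hN1ne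
    obtain ⟨C, u, hu, hf⟩ := eigen_decomp hN2 hk hμne f heig
    obtain ⟨x0, hx0⟩ := multislice_nonempty N r k hk
    have hC : C = 0 := by
      have h1 := Pop_formula hN2 hx0 C u hu f hf
      rw [heig x0 hx0, hf x0 hx0] at h1
      have h2 : (1 - 1 / ((N : ℝ) - 1)) * C = 0 := by linear_combination -h1
      have ha : 1 - 1 / ((N : ℝ) - 1) ≠ 0 := by
        rw [sub_ne_zero]
        intro h
        rw [eq_div_iff hN1ne] at h
        have : (N : ℝ) = 2 := by linarith
        linarith
      rcases mul_eq_zero.mp h2 with h | h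
      · exact absurd h ha
      · exact h
    have hmem : ∀ ℓ : Fin N,
        (fun x : ↥(multislice N r k) => u ℓ ((x : Fin N → Fin r) ℓ)) ∈
          Submodule.span ℝ (Set.range (fun p : Fin (r - 1) × Fin (N - 1) =>
            fun x : ↥(multislice N r k) =>
              g p.1 ((x : Fin N → Fin r) (Fin.castLE hNle p.2)))) := by
      intro ℓ
      have huspan : u ℓ ∈ Submodule.span ℝ (Set.range g) :=
        mem_span_K hr hpos g hg0 hgli (u ℓ) (hu ℓ)
      by_cases hℓ : (ℓ : ℕ) < N - 1
      · exact coord_span_mem hNle g (u ℓ) huspan ⟨ℓ.1, hℓ⟩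
      · have hrepr : (fun x : ↥(multislice N r k) => u ℓ ((x : Fin N → Fin r) ℓ))
            = -∑ ℓ' : Fin (N - 1), (fun x : ↥(multislice N r k) =>
                u ℓ ((x : Fin N → Fin r) (Fin.castLE hNle ℓ'))) := by
          funext x
          have hsc := sum_coord x.2 (u ℓ)
          rw [hu ℓ] at hsc
          have hqv : (ℓ : ℕ) = N - 1 := by
            have := ℓ.2
            omega
          have hsplit : ∑ i, u ℓ ((x : Fin N → Fin r) i)
              = u ℓ ((x : Fin N → Fin r) ℓ)
                + ∑ i ∈ Finset.univ.erase ℓ,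
                    u ℓ ((x : Fin N → Fin r) i) :=
            (Finset.add_sum_erase _ _ (Finset.mem_univ _)).symm
          rw [hsc, sum_erase_last hNle ℓ hqv] at hsplit
          have hx : ((-∑ ℓ' : Fin (N - 1), (fun x : ↥(multislice N r k) =>
              u ℓ ((x : Fin N → Fin r) (Fin.castLE hNle ℓ')))) x)
              = -∑ ℓ' : Fin (N - 1), u ℓ ((x : Fin N → Fin r) (Fin.castLE hNle ℓ')) := by
            simp [Finset.sum_apply]
          rw [hx]
          linarith [hsplit]
        rw [hrepr]
        exact Submodule.neg_mem _ (Submodule.sum_mem _ fun ℓ' _ =>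
          coord_span_mem hNle g (u ℓ) huspan ℓ')
    have hfeq : (fun x : ↥(multislice N r k) => f x)
        = ∑ ℓ : Fin N, (fun x : ↥(multislice N r k) => u ℓ ((x : Fin N → Fin r) ℓ)) := by
      funext x
      rw [hf x.1 x.2, hC, zero_add]
      simp [Finset.sum_apply]
    rw [hfeq]
    exact Submodule.sum_mem _ fun ℓ _ => hmem ℓ
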